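/- Let q ≥ 2 be an integer and a, b, ℓ nonnegative integers with a, b ≥ 1 and a + b ≥ 2. Define α = q^{a+b-1}(q^{ℓ+1}+1) / ((q^a - (-1)^a)(q^b - (-1)^b)) as a rational number. Then α ≥ q/(q+1). -/
import Mathlib


/-- Uniform lower bound α^H ≥ q/(q+1) for the Hermitian ratio factor. -/
theorem stmt_6 (q a b ℓ : ℕ) (hq : 2 ≤ q) (ha : 1 ≤ a) (hb : 1 ≤ b)
    (hab : 2 ≤ a + b) :
    (q : ℚ) / (q + 1) ≤
      (q : ℚ) ^ (a + b - 1) * ((q : ℚ) ^ (ℓ + 1) + 1) /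
        (((q : ℚ) ^ a - (-1 : ℚ) ^ a) * ((q : ℚ) ^ b - (-1 : ℚ) ^ b)) := by
  have hQ : (2:ℚ) ≤ (q:ℚ) := by exact_mod_cast hq
  have hQ0 : (0:ℚ) < (q:ℚ) := by linarith
  obtain ⟨a', rfl⟩ : ∃ a', a = a' + 1 := ⟨a - 1, by omega⟩
  obtain ⟨b', rfl⟩ : ∃ b', b = b' + 1 := ⟨b - 1, by omega⟩
  have key : ∀ n : ℕ, 0 < (q:ℚ)^(n+1) - (-1:ℚ)^(n+1) ∧
      (q:ℚ)^(n+1) - (-1:ℚ)^(n+1) ≤ (q:ℚ)^(n+1) + 1 := by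
    intro n
    have h2 : (2:ℚ) ≤ (q:ℚ)^(n+1) :=
      le_trans hQ (le_self_pow₀ (by linarith) (by omega))
    rcases neg_one_pow_eq_or ℚ (n+1) with h | h <;> rw [h] <;> constructor <;> linarith
  obtain ⟨hxa, hxa'⟩ := key a'
  obtain ⟨hxb, hxb'⟩ := key b'
  have hD : 0 < ((q:ℚ)^(a'+1) - (-1:ℚ)^(a'+1)) * ((q:ℚ)^(b'+1) - (-1:ℚ)^(b'+1)) :=
    mul_pos hxa hxb
  rw [div_le_div_iff₀ (by linarith) hD]
  have hDle : ((q:ℚ)^(a'+1) - (-1:ℚ)^(a'+1)) * ((q:ℚ)^(b'+1) - (-1:ℚ)^(b'+1)) ≤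
      ((q:ℚ)^(a'+1) + 1) * ((q:ℚ)^(b'+1) + 1) :=
    mul_le_mul hxa' hxb' (le_of_lt hxb) (by positivity)
  have hL : (q:ℚ) + 1 ≤ (q:ℚ)^(ℓ+1) + 1 := by
    have : (q:ℚ)^1 ≤ (q:ℚ)^(ℓ+1) := pow_le_pow_right₀ (by linarith) (by omega)
    simpa using this
  have hX : (1:ℚ) ≤ (q:ℚ)^a' := one_le_pow₀ (by linarith)
  have hY : (1:ℚ) ≤ (q:ℚ)^b' := one_le_pow₀ (by linarith)
  have hexp : a' + 1 + (b' + 1) - 1 = a' + b' + 1 := by omega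
  rw [hexp]
  have e1 : (q:ℚ)^(a'+1) = (q:ℚ)^a' * q := by ring
  have e2 : (q:ℚ)^(b'+1) = (q:ℚ)^b' * q := by ring
  have e3 : (q:ℚ)^(a'+b'+1) = (q:ℚ)^a' * (q:ℚ)^b' * q := by ring
  set X := (q:ℚ)^a' with hXdef
  set Y := (q:ℚ)^b' with hYdef
  have core : (X * q + 1) * (Y * q + 1) ≤ X * Y * ((q + 1) * (q + 1)) := by
    nlinarith [mul_nonneg (mul_nonneg (by linarith : (0:ℚ) ≤ X) hQ0.le) (by linarith : (0:ℚ) ≤ Y - 1),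
      mul_nonneg (mul_nonneg (by linarith : (0:ℚ) ≤ Y) hQ0.le) (by linarith : (0:ℚ) ≤ X - 1),
      mul_le_mul hX hY (by norm_num) (by linarith : (0:ℚ) ≤ X)]
  have main : (q:ℚ) * ((X * q + 1) * (Y * q + 1)) ≤ X * Y * q * ((q + 1) * (q + 1)) := by
    have := mul_le_mul_of_nonneg_left core hQ0.le
    linarith [this]
  calc (q:ℚ) * (((q:ℚ)^(a'+1) - (-1:ℚ)^(a'+1)) * ((q:ℚ)^(b'+1) - (-1:ℚ)^(b'+1)))
      ≤ (q:ℚ) * (((q:ℚ)^(a'+1) + 1) * ((q:ℚ)^(b'+1) + 1)) := by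
        exact mul_le_mul_of_nonneg_left hDle (le_of_lt hQ0)
    _ = (q:ℚ) * ((X * q + 1) * (Y * q + 1)) := by rw [e1, e2]
    _ ≤ X * Y * q * ((q + 1) * (q + 1)) := by nlinarith [main]
    _ ≤ X * Y * q * (((q:ℚ)^(ℓ+1) + 1) * (q + 1)) := by
        apply mul_le_mul_of_nonneg_left _ (by positivity)
        exact mul_le_mul_of_nonneg_right hL (by linarith)
    _ = (q:ℚ)^(a'+b'+1) * ((q:ℚ)^(ℓ+1) + 1) * (q + 1) := by rw [e3]; ring
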